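/- arXiv:1103.3906 — 3 statements merged into one kernel-verified Lean document; each statement's English description precedes it below -/
import Mathlib

section
/- Let H and K be Hilbert spaces and T : H → K a bounded linear operator with ||T|| = 1 and ||T||_e < 1. Then T has a maximizing vector, i.e. there exists a nonzero x ∈ H with ||Tx|| = ||x||, and moreover the space of maximizing vectors {x ∈ H : ||Tx|| = ||x||} is a finite-dimensional subspace of H. -/
open MeasureTheory ComplexConjugate

noncomputable section

namespace MeroIdx

variable {H K : Type*} [NormedAddCommGroup H] [InnerProductSpace ℂ H]
  [NormedAddCommGroup K] [InnerProductSpace ℂ K]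

/-- `sValue m T` is the `m`-th singular value of `T`, defined as the distance from `T`
to the operators of rank at most `m`. -/
def sValue (m : ℕ) (T : H →L[ℂ] K) : ℝ :=
  sInf { c : ℝ | ∃ R : H →L[ℂ] K, Module.rank ℂ ↥(LinearMap.range (R : H →ₗ[ℂ] K)) ≤ m ∧ c = ‖T - R‖ }

/-- The essential norm of `T` : the distance from `T` to the compact operators. -/
def essNorm (T : H →L[ℂ] K) : ℝ :=
  sInf { c : ℝ | ∃ S : H →L[ℂ] K, IsCompactOperator S ∧ c = ‖T - S‖ }

section Aux

open ContinuousLinearMap Filter Topology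

local notation "⟪" x ", " y "⟫" => @inner ℂ _ _ x y

/-- Cauchy–Schwarz type inequality for positive (symmetric) operators. -/
lemma cs_lemma (B : H →L[ℂ] H) (hsym : ∀ x y : H, ⟪B x, y⟫ = ⟪x, B y⟫)
    (hpos : ∀ x : H, 0 ≤ RCLike.re ⟪B x, x⟫) (x : H) :
    ‖B x‖ ^ 2 ≤ ‖B‖ * RCLike.re ⟪B x, x⟫ := by
  have key : ∀ y : H, ∀ t : ℝ, 0 ≤ RCLike.re ⟪B y, y⟫ * t ^ 2 + (2 * RCLike.re ⟪B x, y⟫) * t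
      + RCLike.re ⟪B x, x⟫ := by
    intro y t
    have h0 := hpos (x + (t : ℂ) • y)
    have hexp : ⟪B (x + (t:ℂ) • y), x + (t:ℂ) • y⟫
        = ⟪B x, x⟫ + (t:ℂ) * ⟪B x, y⟫ + (t:ℂ) * conj ⟪B x, y⟫ + (t:ℂ) ^ 2 * ⟪B y, y⟫ := by
      have hyx : ⟪B y, x⟫ = conj ⟪B x, y⟫ := by
        rw [hsym y x, ← inner_conj_symm]
      rw [_root_.map_add, _root_.map_smul, inner_add_left, inner_add_right, inner_add_right,
        inner_smul_left, inner_smul_right, inner_smul_left, inner_smul_right, hyx,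
        Complex.conj_ofReal]
      ring
    rw [hexp] at h0
    simp only [_root_.map_add, RCLike.mul_re, RCLike.mul_im, RCLike.ofReal_re, RCLike.ofReal_im,
      RCLike.conj_re, RCLike.conj_im, RCLike.re_to_complex, RCLike.im_to_complex,
      Complex.ofReal_re, Complex.ofReal_im, Complex.mul_im, Complex.mul_re, pow_two] at h0 ⊢
    nlinarith [h0]
  by_cases hBx : ‖B x‖ = 0
  · rw [hBx]
    exact le_trans (by norm_num) (mul_nonneg (norm_nonneg _) (hpos x))
  · have hquad := key (B x)
    have hd := discrim_le_zero (a := RCLike.re ⟪B (B x), B x⟫) (b := 2 * RCLike.re ⟪B x, B x⟫)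
      (c := RCLike.re ⟪B x, x⟫) (fun t => by nlinarith [hquad t])
    rw [discrim] at hd
    have hn : RCLike.re ⟪B x, B x⟫ = ‖B x‖ ^ 2 := inner_self_eq_norm_sq _
    have h5 : RCLike.re ⟪B (B x), B x⟫ ≤ ‖B‖ * ‖B x‖ ^ 2 := by
      calc RCLike.re ⟪B (B x), B x⟫ ≤ ‖B (B x)‖ * ‖B x‖ := re_inner_le_norm _ _
      _ ≤ (‖B‖ * ‖B x‖) * ‖B x‖ :=
          mul_le_mul_of_nonneg_right (B.le_opNorm _) (norm_nonneg _)
      _ = ‖B‖ * ‖B x‖ ^ 2 := by ring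
    have hb2 : 0 < ‖B x‖ ^ 2 := by positivity
    nlinarith [hd, h5, hpos x, hb2, hn]

/-- Antilipschitz estimate for `1 - R†R`. -/
lemma antilip [CompleteSpace H] [CompleteSpace K] (R : H →L[ℂ] K) (x : H) :
    (1 - ‖R‖ ^ 2) * ‖x‖ ≤ ‖x - adjoint R (R x)‖ := by
  rcases eq_or_ne x 0 with rfl | hx
  · simp
  · have hx0 : (0:ℝ) < ‖x‖ := norm_pos_iff.mpr hx
    have h1 : RCLike.re ⟪x - adjoint R (R x), x⟫ = ‖x‖ ^ 2 - ‖R x‖ ^ 2 := by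
      rw [inner_sub_left, adjoint_inner_left, _root_.map_sub, inner_self_eq_norm_sq,
        inner_self_eq_norm_sq]
    have h2 : RCLike.re ⟪x - adjoint R (R x), x⟫ ≤ ‖x - adjoint R (R x)‖ * ‖x‖ :=
      re_inner_le_norm _ _
    have h3 : ‖R x‖ ≤ ‖R‖ * ‖x‖ := R.le_opNorm x
    have h4 : (0:ℝ) ≤ ‖R‖ := norm_nonneg _
    have h5 : (0:ℝ) ≤ ‖R x‖ := norm_nonneg _
    nlinarith [h1, h2, h3, hx0]

lemma subseq_compact (S : H →L[ℂ] K) (hS : IsCompactOperator S) (u : ℕ → H) {M : ℝ}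
    (hu : ∀ n, ‖u n‖ ≤ M) :
    ∃ φ : ℕ → ℕ, StrictMono φ ∧ ∃ z : K, Tendsto (fun n => S (u (φ n))) atTop (𝓝 z) := by
  have hb : Bornology.IsBounded (Set.range u) := by
    rw [isBounded_iff_forall_norm_le]
    exact ⟨M, by rintro x ⟨n, rfl⟩; exact hu n⟩
  obtain ⟨C, hC, hsub⟩ :=
    IsCompactOperator.image_subset_compact_of_bounded (f := (S : H →ₛₗ[RingHom.id ℂ] K)) hS hb
  have hmem : ∀ n, S (u n) ∈ C := fun n => hsub ⟨u n, ⟨n, rfl⟩, rfl⟩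
  obtain ⟨z, _, φ, hφ, hz⟩ := hC.tendsto_subseq hmem
  exact ⟨φ, hφ, z, hz⟩

/-- Schauder-type extraction for the adjoint of a compact operator. -/
lemma subseq_adjoint [CompleteSpace H] [CompleteSpace K] (S : H →L[ℂ] K)
    (hS : IsCompactOperator S) (w : ℕ → K) {M : ℝ} (hw : ∀ n, ‖w n‖ ≤ M) :
    ∃ φ : ℕ → ℕ, StrictMono φ ∧
      ∃ z : H, Tendsto (fun n => adjoint S (w (φ n))) atTop (𝓝 z) := by
  set a : ℕ → H := fun n => adjoint S (w n) with ha
  have hM0 : 0 ≤ M := le_trans (norm_nonneg _) (hw 0)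
  have hab : ∀ n, ‖a n‖ ≤ ‖(adjoint S : K →L[ℂ] H)‖ * M := fun n =>
    le_trans ((adjoint S).le_opNorm _) (by
      have := hw n
      have h0 : (0:ℝ) ≤ ‖(adjoint S : K →L[ℂ] H)‖ := norm_nonneg _
      nlinarith)
  obtain ⟨φ, hφ, z', hz'⟩ := subseq_compact S hS a hab
  have hkey : ∀ p q : ℕ, ‖a p - a q‖ ^ 2 ≤ 2 * M * ‖S (a p) - S (a q)‖ := by
    intro p q
    have h1 : (‖a p - a q‖ : ℝ) ^ 2 = RCLike.re ⟪w p - w q, S (a p) - S (a q)⟫ := by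
      have hd : adjoint S (w p - w q) = a p - a q := _root_.map_sub _ _ _
      rw [← inner_self_eq_norm_sq (𝕜 := ℂ) (a p - a q), ← hd, adjoint_inner_left, hd, _root_.map_sub]
    have h2 : RCLike.re ⟪w p - w q, S (a p) - S (a q)⟫ ≤ ‖w p - w q‖ * ‖S (a p) - S (a q)‖ :=
      re_inner_le_norm _ _
    have h3 : ‖w p - w q‖ ≤ 2 * M := by
      calc ‖w p - w q‖ ≤ ‖w p‖ + ‖w q‖ := norm_sub_le _ _
      _ ≤ 2 * M := by have := hw p; have := hw q; linarith
    have h4 : (0:ℝ) ≤ ‖S (a p) - S (a q)‖ := norm_nonneg _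
    nlinarith
  have hcauchy : CauchySeq (a ∘ φ) := by
    rw [Metric.cauchySeq_iff]
    intro ε hε
    have hC : CauchySeq (fun n => S (a (φ n))) := hz'.cauchySeq
    rw [Metric.cauchySeq_iff] at hC
    obtain ⟨N, hN⟩ := hC (ε ^ 2 / (2 * M + 1)) (by positivity)
    refine ⟨N, fun p hp q hq => ?_⟩
    have h1 := hkey (φ p) (φ q)
    have h2 := hN p hp q hq
    rw [dist_eq_norm] at h2 ⊢
    have h3 : (0:ℝ) ≤ ‖S (a (φ p)) - S (a (φ q))‖ := norm_nonneg _
    have h5 : ‖a (φ p) - a (φ q)‖ ^ 2 < ε ^ 2 := by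
      calc ‖a (φ p) - a (φ q)‖ ^ 2 ≤ 2 * M * ‖S (a (φ p)) - S (a (φ q))‖ := h1
      _ ≤ (2 * M + 1) * ‖S (a (φ p)) - S (a (φ q))‖ := by nlinarith
      _ < (2 * M + 1) * (ε ^ 2 / (2 * M + 1)) := by
          apply mul_lt_mul_of_pos_left h2 (by linarith)
      _ = ε ^ 2 := by field_simp
    show ‖a (φ p) - a (φ q)‖ < ε
    nlinarith [h5, hε, norm_nonneg (a (φ p) - a (φ q))]
  obtain ⟨z, hz⟩ := cauchySeq_tendsto_of_complete hcauchy
  exact ⟨φ, hφ, z, hz⟩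

/-- Master extraction lemma: if `u` is bounded and `u n - T†T u n → 0`, with `T` a compact
perturbation of a strict contraction, then `u` has a convergent subsequence. -/
lemma master [CompleteSpace H] [CompleteSpace K] (T S : H →L[ℂ] K)
    (hS : IsCompactOperator S) (hR : ‖T - S‖ < 1) (u : ℕ → H) {M : ℝ}
    (hu : ∀ n, ‖u n‖ ≤ M)
    (hB : Tendsto (fun n => u n - adjoint T (T (u n))) atTop (𝓝 0)) :
    ∃ (x : H) (φ : ℕ → ℕ), StrictMono φ ∧ Tendsto (u ∘ φ) atTop (𝓝 x) := by
  set R : H →L[ℂ] K := T - S with hRdef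
  obtain ⟨φ₁, hφ₁, z₁, hz₁⟩ := subseq_compact S hS u hu
  have hw : ∀ n, ‖R (u (φ₁ n))‖ ≤ ‖R‖ * M := fun n => by
    calc ‖R (u (φ₁ n))‖ ≤ ‖R‖ * ‖u (φ₁ n)‖ := R.le_opNorm _
    _ ≤ ‖R‖ * M := mul_le_mul_of_nonneg_left (hu _) (norm_nonneg _)
  obtain ⟨φ₂, hφ₂, z₂, hz₂⟩ := subseq_adjoint S hS (fun n => R (u (φ₁ n))) hw
  set φ : ℕ → ℕ := φ₁ ∘ φ₂ with hφdef
  have hφ : StrictMono φ := hφ₁.comp hφ₂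
  have hGid : ∀ x : H, x - adjoint R (R x)
      = (x - adjoint T (T x)) + adjoint T (S x) + adjoint S (R x) := by
    intro x
    have : adjoint R = adjoint T - adjoint S := by rw [hRdef, _root_.map_sub]
    rw [this]
    simp only [sub_apply, _root_.map_sub, hRdef]
    abel
  have hg : Tendsto (fun n => u (φ n) - adjoint R (R (u (φ n)))) atTop
      (𝓝 (0 + adjoint T z₁ + z₂)) := by
    simp only [hGid]
    refine Tendsto.add (Tendsto.add ?_ ?_) ?_
    · exact (hB.comp (hφ.tendsto_atTop))
    · have h1 : Tendsto (fun n => S (u (φ n))) atTop (𝓝 z₁) :=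
        hz₁.comp hφ₂.tendsto_atTop
      exact ((adjoint T).continuous.tendsto z₁).comp h1
    · exact hz₂.comp (tendsto_id)
  have heps : (0:ℝ) < 1 - ‖R‖ ^ 2 := by
    have h0 : (0:ℝ) ≤ ‖R‖ := norm_nonneg _
    nlinarith [hR]
  have hanti : ∀ p q : ℕ, (1 - ‖R‖ ^ 2) * ‖u (φ p) - u (φ q)‖
      ≤ ‖(u (φ p) - adjoint R (R (u (φ p)))) - (u (φ q) - adjoint R (R (u (φ q))))‖ := by
    intro p q
    have := antilip R (u (φ p) - u (φ q))
    calc (1 - ‖R‖ ^ 2) * ‖u (φ p) - u (φ q)‖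
        ≤ ‖(u (φ p) - u (φ q)) - adjoint R (R (u (φ p) - u (φ q)))‖ := this
      _ = ‖(u (φ p) - adjoint R (R (u (φ p)))) - (u (φ q) - adjoint R (R (u (φ q))))‖ := by
          rw [_root_.map_sub R, _root_.map_sub (adjoint R)]
          congr 1
          abel
  have hcauchy : CauchySeq (u ∘ φ) := by
    rw [Metric.cauchySeq_iff]
    intro ε hε
    have hgC := hg.cauchySeq
    rw [Metric.cauchySeq_iff] at hgC
    obtain ⟨N, hN⟩ := hgC ((1 - ‖R‖ ^ 2) * ε) (by positivity)
    refine ⟨N, fun p hp q hq => ?_⟩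
    have h1 := hanti p q
    have h2 := hN p hp q hq
    rw [dist_eq_norm] at h2 ⊢
    show ‖u (φ p) - u (φ q)‖ < ε
    nlinarith [h1, h2, heps]
  obtain ⟨x, hx⟩ := cauchySeq_tendsto_of_complete hcauchy
  exact ⟨x, φ, hφ, hx⟩

end Aux

/-- An operator of norm one whose essential norm is less than one has a
maximizing vector, and the set of its maximizing vectors (together with `0`) is a
finite-dimensional subspace. -/
theorem exists_maximizingVector_of_essNorm_lt_one
    {H K : Type*} [NormedAddCommGroup H] [InnerProductSpace ℂ H] [CompleteSpace H]
    [NormedAddCommGroup K] [InnerProductSpace ℂ K] [CompleteSpace K]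
    (T : H →L[ℂ] K) (hT : ‖T‖ = 1) (he : essNorm T < 1) :
    (∃ x : H, x ≠ 0 ∧ ‖T x‖ = ‖x‖) ∧
      ∃ V : Submodule ℂ H, FiniteDimensional ℂ ↥V ∧
        (V : Set H) = { x : H | ‖T x‖ = ‖x‖ } := by
  classical
  have hne : { c : ℝ | ∃ S : H →L[ℂ] K, IsCompactOperator S ∧ c = ‖T - S‖ }.Nonempty :=
    ⟨‖T - 0‖, 0, isCompactOperator_zero, rfl⟩
  obtain ⟨c, ⟨S, hScomp, rfl⟩, hc⟩ := exists_lt_of_csInf_lt hne he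
  set B : H →L[ℂ] H :=
    ContinuousLinearMap.id ℂ H - (ContinuousLinearMap.adjoint T).comp T with hBdef
  have hBapp : ∀ x : H, B x = x - ContinuousLinearMap.adjoint T (T x) := fun x => rfl
  have hq : ∀ x : H, RCLike.re (inner ℂ (B x) x : ℂ) = ‖x‖ ^ 2 - ‖T x‖ ^ 2 := by
    intro x
    rw [hBapp, inner_sub_left, ContinuousLinearMap.adjoint_inner_left, _root_.map_sub,
      inner_self_eq_norm_sq, inner_self_eq_norm_sq]
  have hsym : ∀ x y : H, (inner ℂ (B x) y : ℂ) = inner ℂ x (B y) := by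
    intro x y
    rw [hBapp x, hBapp y, inner_sub_left, inner_sub_right,
      ContinuousLinearMap.adjoint_inner_left, ContinuousLinearMap.adjoint_inner_right]
  have hTle : ∀ x : H, ‖T x‖ ≤ ‖x‖ := fun x => by
    have := T.le_opNorm x; rwa [hT, one_mul] at this
  have hpos : ∀ x : H, 0 ≤ RCLike.re (inner ℂ (B x) x : ℂ) := by
    intro x; rw [hq]
    have h1 := hTle x
    have h2 : (0:ℝ) ≤ ‖T x‖ := norm_nonneg _
    nlinarith
  have hcs := cs_lemma B hsym hpos
  have hker_iff : ∀ x : H, B x = 0 ↔ ‖T x‖ = ‖x‖ := by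
    intro x
    constructor
    · intro h
      have h0 := hq x
      rw [h, inner_zero_left, map_zero] at h0
      have h1 : ‖T x‖ ^ 2 = ‖x‖ ^ 2 := by linarith
      exact (sq_eq_sq₀ (norm_nonneg _) (norm_nonneg _)).mp h1
    · intro h
      have h1 : RCLike.re (inner ℂ (B x) x : ℂ) = 0 := by rw [hq, h]; ring
      have h2 := hcs x
      rw [h1, mul_zero] at h2
      have h3 : ‖B x‖ = 0 := by nlinarith [norm_nonneg (B x)]
      exact norm_eq_zero.mp h3
  have hBcont : Continuous B := B.continuous
  constructor
  · -- existence of a maximizing vector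
    have hexists : ∀ n : ℕ, ∃ v : H, ‖v‖ = 1 ∧ 1 - 1/(n+1 : ℝ) < ‖T v‖ := by
      intro n
      have hr : 1 - 1/(n+1:ℝ) < ‖T‖ := by
        rw [hT]
        have : (0:ℝ) < 1/(n+1:ℝ) := by positivity
        linarith
      obtain ⟨x, hx1, hx2⟩ := T.exists_lt_apply_of_lt_opNorm hr
      have hr0 : (0:ℝ) ≤ 1 - 1/(n+1:ℝ) := by
        have h1 : 1/(n+1:ℝ) ≤ 1 := by
          rw [div_le_one (by positivity)]
          have : (0:ℝ) ≤ (n:ℝ) := Nat.cast_nonneg n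
          linarith
        linarith
      have hx0 : x ≠ 0 := by
        rintro rfl
        rw [map_zero, norm_zero] at hx2
        linarith
      have hxn : (0:ℝ) < ‖x‖ := norm_pos_iff.mpr hx0
      refine ⟨((‖x‖ : ℂ))⁻¹ • x, ?_, ?_⟩
      · rw [norm_smul, norm_inv, Complex.norm_real, Real.norm_eq_abs, abs_of_pos hxn,
          inv_mul_cancel₀ (ne_of_gt hxn)]
      · rw [_root_.map_smul, norm_smul, norm_inv, Complex.norm_real, Real.norm_eq_abs,
          abs_of_pos hxn]
        have hinv : 1 < ‖x‖⁻¹ := (one_lt_inv₀ hxn).mpr hx1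
        nlinarith [norm_nonneg (T x)]
    choose u hu1 hu2 using hexists
    have huM : ∀ n : ℕ, ‖u n‖ ≤ 1 := fun n => le_of_eq (hu1 n)
    have hTu : Filter.Tendsto (fun n => ‖T (u n)‖) Filter.atTop (nhds 1) := by
      have hlow : Filter.Tendsto (fun n : ℕ => 1 - 1/(n+1:ℝ)) Filter.atTop (nhds 1) := by
        have h1 := tendsto_one_div_add_atTop_nhds_zero_nat (𝕜 := ℝ)
        have h2 := (tendsto_const_nhds (x := (1:ℝ)) (f := Filter.atTop)).sub h1
        simpa using h2
      refine tendsto_of_tendsto_of_tendsto_of_le_of_le hlow tendsto_const_nhds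
        (fun n => le_of_lt (hu2 n)) (fun n => ?_)
      have := hTle (u n)
      rwa [hu1 n] at this
    have hq0 : Filter.Tendsto (fun n => RCLike.re (inner ℂ (B (u n)) (u n) : ℂ))
        Filter.atTop (nhds 0) := by
      have heq : (fun n => RCLike.re (inner ℂ (B (u n)) (u n) : ℂ))
          = fun n => 1 - ‖T (u n)‖ ^ 2 := by
        funext n
        rw [hq, hu1 n, one_pow]
      rw [heq]
      have h2 : Filter.Tendsto (fun n => ‖T (u n)‖ ^ 2) Filter.atTop (nhds 1) := by
        have := hTu.pow 2
        simpa using this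
      have h3 := (tendsto_const_nhds (x := (1:ℝ)) (f := Filter.atTop)).sub h2
      simpa using h3
    have hBsq : Filter.Tendsto (fun n => ‖B (u n)‖ ^ 2) Filter.atTop (nhds 0) := by
      have hub := hq0.const_mul ‖B‖
      rw [mul_zero] at hub
      exact squeeze_zero (fun n => sq_nonneg _) (fun n => hcs (u n)) hub
    have hBn : Filter.Tendsto (fun n => ‖B (u n)‖) Filter.atTop (nhds 0) := by
      have h3 := (Real.continuous_sqrt.tendsto 0).comp hBsq
      have h4 : (fun n => Real.sqrt (‖B (u n)‖ ^ 2)) = fun n => ‖B (u n)‖ :=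
        funext fun n => Real.sqrt_sq (norm_nonneg _)
      rw [Real.sqrt_zero] at h3
      rwa [show Real.sqrt ∘ (fun n => ‖B (u n)‖ ^ 2) = fun n => ‖B (u n)‖ from h4] at h3
    have hB0 : Filter.Tendsto (fun n => B (u n)) Filter.atTop (nhds 0) :=
      tendsto_zero_iff_norm_tendsto_zero.mpr hBn
    obtain ⟨x, φ, hφ, hx⟩ := master T S hScomp hc u huM hB0
    have hxnorm : ‖x‖ = 1 := by
      have h1 : Filter.Tendsto (fun n => ‖u (φ n)‖) Filter.atTop (nhds ‖x‖) :=
        (continuous_norm.tendsto x).comp hx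
      have h2 : (fun n => ‖u (φ n)‖) = fun _ => (1:ℝ) := funext fun n => hu1 (φ n)
      rw [h2] at h1
      exact (tendsto_nhds_unique tendsto_const_nhds h1).symm
    have hx0 : x ≠ 0 := by
      intro h
      rw [h, norm_zero] at hxnorm
      exact zero_ne_one hxnorm
    have hBx : B x = 0 := by
      have h1 : Filter.Tendsto (fun n => B (u (φ n))) Filter.atTop (nhds (B x)) :=
        (hBcont.tendsto x).comp hx
      have h2 : Filter.Tendsto (fun n => B (u (φ n))) Filter.atTop (nhds 0) :=
        hB0.comp hφ.tendsto_atTop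
      exact tendsto_nhds_unique h1 h2
    exact ⟨x, hx0, (hker_iff x).mp hBx⟩
  · -- the space of maximizing vectors
    refine ⟨B.ker, ?_, ?_⟩
    · -- finite dimensionality
      have hseq : IsSeqCompact ((B.ker : Set H) ∩ Metric.closedBall 0 1) := by
        intro v hv
        have hb : ∀ n, ‖v n‖ ≤ 1 := fun n => by
          have := (hv n).2
          rwa [Metric.mem_closedBall, dist_zero_right] at this
        have hker : ∀ n, B (v n) = 0 := fun n => (hv n).1
        have hB0 : Filter.Tendsto (fun n => v n - ContinuousLinearMap.adjoint T (T (v n)))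
            Filter.atTop (nhds 0) := by
          have heq : (fun n => v n - ContinuousLinearMap.adjoint T (T (v n)))
              = fun _ => (0:H) := funext fun n => by rw [← hBapp]; exact hker n
          rw [heq]
          exact tendsto_const_nhds
        obtain ⟨x, φ, hφ, hx⟩ := master T S hScomp hc v hb hB0
        refine ⟨x, ⟨?_, ?_⟩, φ, hφ, hx⟩
        · exact (ContinuousLinearMap.isClosed_ker B).mem_of_tendsto hx
            (Filter.Eventually.of_forall fun n => (hv (φ n)).1)
        · exact Metric.isClosed_closedBall.mem_of_tendsto hx
            (Filter.Eventually.of_forall fun n => (hv (φ n)).2)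
      have hcompact : IsCompact ((B.ker : Set H) ∩ Metric.closedBall 0 1) :=
        hseq.isCompact
      have himg : Subtype.val '' (Metric.closedBall (0 : B.ker) 1)
          = ((B.ker : Set H) ∩ Metric.closedBall 0 1) := by
        ext y
        simp only [Set.mem_image, Metric.mem_closedBall, dist_zero_right, Set.mem_inter_iff,
          SetLike.mem_coe]
        constructor
        · rintro ⟨z, hz1, rfl⟩
          exact ⟨z.2, by simpa [Submodule.coe_norm] using hz1⟩
        · rintro ⟨hy1, hy2⟩
          exact ⟨⟨y, hy1⟩, by simpa [Submodule.coe_norm] using hy2, rfl⟩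
      have hcb : IsCompact (Metric.closedBall (0 : B.ker) 1) := by
        rw [Topology.IsEmbedding.subtypeVal.isCompact_iff, himg]
        exact hcompact
      exact FiniteDimensional.of_isCompact_closedBall₀ ℂ one_pos hcb
    · ext y
      simp only [SetLike.mem_coe, Set.mem_setOf_eq, LinearMap.mem_ker]
      exact hker_iff y

end MeroIdx
end
end

section
/- Let Ψ ∈ L^∞(M_n) with ||H_Ψ||_e < ||H_Ψ|| = ||Ψ||_∞, and suppose there is a constant t > ||H_Ψ||_e with ||Ψ(ζ)ξ|| ≥ t||ξ|| for a.e. ζ and all ξ ∈ ℂ^n (i.e. the smallest singular value of Ψ(ζ) is at least t a.e.). Then ker T_Ψ = { f ∈ H² (ℂ^n) : ||H_Ψ f||_2 = ||Ψ f||_2 } is a nonzero finite-dimensional subspace of H²(ℂ^n). -/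
open MeasureTheory ComplexConjugate

noncomputable section

namespace MeroIdx

/-! Singular values and essential norm of operators between Hilbert spaces -/

variable {H K : Type*} [NormedAddCommGroup H] [InnerProductSpace ℂ H]
  [NormedAddCommGroup K] [InnerProductSpace ℂ K]

/-! The circle, L², Hardy space -/

instance : Fact (0 < 2 * Real.pi) := ⟨by positivity⟩

abbrev circ : Type := AddCircle (2 * Real.pi)

/-- Normalized Lebesgue (Haar) measure on the circle. -/
def mu : Measure circ := @AddCircle.haarAddCircle (2 * Real.pi) _

instance : IsProbabilityMeasure mu := by unfold mu; infer_instance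

abbrev L2 (m : ℕ) := Lp (EuclideanSpace ℂ (Fin m)) 2 mu

/-- The function `ζ ↦ ζ` on the circle (i.e. `t ↦ exp (i t)`). -/
def expmap : circ → ℂ := fun t => fourier 1 t

/-- The element `z^k ⬝ e_i` of `L²(ℂ^m)`. -/
def fvec (m : ℕ) (k : ℤ) (i : Fin m) : L2 m :=
  ContinuousMap.toLp 2 mu ℂ
    ⟨fun t => (fourier k t : ℂ) • (EuclideanSpace.single i (1 : ℂ)),
      ((fourier k).continuous).smul continuous_const⟩

/-- The span of the negative-frequency basis vectors. -/
def negSpan (m : ℕ) : Submodule ℂ (L2 m) :=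
  Submodule.span ℂ { f | ∃ k : ℤ, k < 0 ∧ ∃ i : Fin m, f = fvec m k i }

/-- The Hardy space `H²(ℂ^m)`: the orthogonal complement of the negative frequencies,
i.e. the functions in `L²` whose negative Fourier coefficients vanish. -/
def Hardy (m : ℕ) : Submodule ℂ (L2 m) := (negSpan m)ᗮ

instance (m : ℕ) : CompleteSpace ↥(Hardy m) :=
  (Submodule.isClosed_orthogonal _).completeSpace_coe

/-- Orthogonal projection onto the Hardy space. -/
def Pplus (m : ℕ) : L2 m →L[ℂ] ↥(Hardy m) := (Hardy m).orthogonalProjectionOnto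

/-- `P₊` as an endomorphism of `L²`. -/
def PplusL (m : ℕ) : L2 m →L[ℂ] L2 m := (Hardy m).subtypeL.comp (Pplus m)

/-- `P₋ = I - P₊`, the orthogonal projection onto `H²₋(ℂ^m) = L² ⊖ H²`. -/
def PminusL (m : ℕ) : L2 m →L[ℂ] L2 m := ContinuousLinearMap.id ℂ (L2 m) - PplusL m

/-! Matrix symbols, multiplication operators, Hankel and Toeplitz operators -/

/-- The continuous linear map `ℂ^n → ℂ^m` given by a matrix. -/
def matCLM {m n : ℕ} (A : Matrix (Fin m) (Fin n) ℂ) :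
    EuclideanSpace ℂ (Fin n) →L[ℂ] EuclideanSpace ℂ (Fin m) :=
  LinearMap.toContinuousLinearMap (Matrix.toEuclideanLin A)

/-- The operator norm of a matrix (as an operator `ℓ²(n) → ℓ²(m)`). -/
def matOpNorm {m n : ℕ} (A : Matrix (Fin m) (Fin n) ℂ) : ℝ := ‖matCLM A‖

/-- The `j`-th singular value of a matrix. -/
def matSV {m n : ℕ} (j : ℕ) (A : Matrix (Fin m) (Fin n) ℂ) : ℝ := sValue j (matCLM A)

/-- Essential supremum of a (nonnegative) real function on the circle. -/
def essSupR (g : circ → ℝ) : ℝ := (essSup (fun t => ENNReal.ofReal (g t)) mu).toReal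

/-- The `L^∞(M_{m,n})`-norm: essential supremum of the pointwise operator norm. -/
def linfNorm {m n : ℕ} (Φ : circ → Matrix (Fin m) (Fin n) ℂ) : ℝ :=
  essSupR fun t => matOpNorm (Φ t)

/-- `M` is the operator of multiplication by the matrix function `Φ` on `L²`. -/
def IsMulOp {m n : ℕ} (Φ : circ → Matrix (Fin m) (Fin n) ℂ) (M : L2 n →L[ℂ] L2 m) : Prop :=
  ∀ f : L2 n, (M f : circ → EuclideanSpace ℂ (Fin m))
      =ᵐ[mu] fun t => Matrix.toEuclideanLin (Φ t) (f t)

/-- The Hankel operator `H_Φ = P₋ M_Φ : H²(ℂ^n) → H²₋(ℂ^m) ⊆ L²(ℂ^m)`,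
presented in terms of the multiplication operator `M = M_Φ`. -/
def Hankel {m n : ℕ} (M : L2 n →L[ℂ] L2 m) : ↥(Hardy n) →L[ℂ] L2 m :=
  (PminusL m).comp (M.comp (Hardy n).subtypeL)

/-- The Toeplitz operator `T_Φ = P₊ M_Φ : H²(ℂ^n) → H²(ℂ^m)`. -/
def Toeplitz {m n : ℕ} (M : L2 n →L[ℂ] L2 m) : ↥(Hardy n) →L[ℂ] ↥(Hardy m) :=
  (Pplus m).comp (M.comp (Hardy n).subtypeL)

/-! Blaschke–Potapov products and the class `H^∞_{(k)}` -/

/-- An elementary Blaschke–Potapov factor. -/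
def bpFactor {n : ℕ} (l : ℂ) (P : Matrix (Fin n) (Fin n) ℂ) (z : ℂ) :
    Matrix (Fin n) (Fin n) ℂ :=
  ((z - l) / (1 - (starRingEnd ℂ) l * z)) • P + (1 - P)

/-- `B` (as a function on the circle) is the boundary-value function of a finite
Blaschke–Potapov product of degree `k`. -/
def IsBPProd (n k : ℕ) (B : circ → Matrix (Fin n) (Fin n) ℂ) : Prop :=
  ∃ (r : ℕ) (U : Matrix (Fin n) (Fin n) ℂ) (l : Fin r → ℂ)
    (P : Fin r → Matrix (Fin n) (Fin n) ℂ),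
    U ∈ Matrix.unitaryGroup (Fin n) ℂ ∧ (∀ j, ‖l j‖ < 1) ∧
    (∀ j, IsSelfAdjoint (P j) ∧ P j * P j = P j) ∧
    (∑ j, (P j).rank) = k ∧
    ∀ t, B t = U * (List.ofFn fun j => bpFactor (l j) (P j) (expmap t)).prod

/-- `Q ∈ H^∞_{(k)}(M_{m,n})`: there is a Blaschke–Potapov product `B` of degree `k`
such that `QB ∈ H^∞`, i.e. multiplication by `QB` maps `H²(ℂ^n)` into `H²(ℂ^m)`. -/
def HkClass {m n : ℕ} (k : ℕ) (Q : circ → Matrix (Fin m) (Fin n) ℂ) : Prop :=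
  ∃ (B : circ → Matrix (Fin n) (Fin n) ℂ) (M : L2 n →L[ℂ] L2 m),
    IsBPProd n k B ∧ IsMulOp (fun t => Q t * B t) M ∧
    ∀ f : L2 n, f ∈ Hardy n → M f ∈ Hardy m

/-- The nested sets `Ω_j^{(k)}(Φ)` from superoptimal approximation:
`Ω_0` consists of the best approximants from `H^∞_{(k)}` in the `L^∞` norm and
`Ω_{j+1}` consists of those elements of `Ω_j` minimizing `ess sup s_{j+1}(Φ - Q)`. -/
def Omega {m n : ℕ} (k : ℕ) (Φ : circ → Matrix (Fin m) (Fin n) ℂ) :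
    ℕ → Set (circ → Matrix (Fin m) (Fin n) ℂ)
  | 0 => { Q | HkClass k Q ∧ ∀ Q', HkClass k Q' →
      linfNorm (fun t => Φ t - Q t) ≤ linfNorm (fun t => Φ t - Q' t) }
  | (j+1) => { Q | Q ∈ Omega k Φ j ∧ ∀ Q' ∈ Omega k Φ j,
      essSupR (fun t => matSV (j+1) (Φ t - Q t)) ≤ essSupR (fun t => matSV (j+1) (Φ t - Q' t)) }

/-- The superoptimal singular values `t_j^{(k)}(Φ)` of degree `k`. -/
def tSV {m n : ℕ} (k : ℕ) (Φ : circ → Matrix (Fin m) (Fin n) ℂ) (j : ℕ) : ℝ :=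
  sInf { v : ℝ | ∃ Q ∈ Omega k Φ j, v = essSupR fun t => matSV j (Φ t - Q t) }

/-- `Φ` is `k`-admissible: `s_k(H_Φ) < s_{k-1}(H_Φ)` and the essential norm of `H_Φ`
is less than every nonzero superoptimal singular value of degree `k` of `Φ`. -/
def kAdmissible {n : ℕ} (k : ℕ) (Φ : circ → Matrix (Fin n) (Fin n) ℂ)
    (MΦ : L2 n →L[ℂ] L2 n) : Prop :=
  IsMulOp Φ MΦ ∧ sValue k (Hankel MΦ) < sValue (k-1) (Hankel MΦ) ∧
  ∀ j : ℕ, tSV k Φ j ≠ 0 → essNorm (Hankel MΦ) < tSV k Φ j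

/-- The squared weighted norm `‖f‖²_W = ∫ (W(ζ) f(ζ), f(ζ)) dm(ζ)` for a matrix weight. -/
def wNormSq {n : ℕ} (W : circ → Matrix (Fin n) (Fin n) ℂ) (f : L2 n) : ℝ :=
  ∫ t, (inner ℂ (Matrix.toEuclideanLin (W t) (f t)) (f t) : ℂ).re ∂mu

/-- `J` is the flip operator `(Jf)(ζ) = conj ζ • conj (f ζ)` on `L²(ℂ^m)`. -/
def IsFlip (m : ℕ) (J : L2 m → L2 m) : Prop :=
  ∀ f : L2 m, (J f : circ → EuclideanSpace ℂ (Fin m)) =ᵐ[mu]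
    fun t => (starRingEnd ℂ) (expmap t) •
      (WithLp.toLp 2 (fun i => (starRingEnd ℂ) (f t i)) : EuclideanSpace ℂ (Fin m))

/-- `Φ ∈ L^∞(M_{m,n})`: measurable and essentially bounded. -/
def MemLinf {m n : ℕ} (Φ : circ → Matrix (Fin m) (Fin n) ℂ) : Prop :=
  AEStronglyMeasurable Φ mu ∧
    essSup (fun t => ENNReal.ofReal (matOpNorm (Φ t))) mu < ⊤


/-! ### Auxiliary general lemmas -/

lemma essNorm_nonneg' (T : H →L[ℂ] K) : 0 ≤ essNorm T :=
  Real.sInf_nonneg (by rintro c ⟨S, _, rfl⟩; exact norm_nonneg _)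

lemma exists_compact_of_essNorm_lt {T : H →L[ℂ] K} {c : ℝ} (h : essNorm T < c) :
    ∃ S : H →L[ℂ] K, IsCompactOperator S ∧ ‖T - S‖ < c := by
  have hne : Set.Nonempty { c : ℝ | ∃ S : H →L[ℂ] K, IsCompactOperator S ∧ c = ‖T - S‖ } :=
    ⟨‖T - 0‖, 0, isCompactOperator_zero, rfl⟩
  obtain ⟨x, ⟨S, hS, rfl⟩, hx⟩ := exists_lt_of_csInf_lt hne h
  exact ⟨S, hS, hx⟩

lemma compact_subseq {E F : Type*} [NormedAddCommGroup E] [NormedSpace ℂ E]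
    [NormedAddCommGroup F] [NormedSpace ℂ F]
    {S : E →L[ℂ] F} (hS : IsCompactOperator S) {u : ℕ → E} {r : ℝ}
    (hu : ∀ n, ‖u n‖ ≤ r) :
    ∃ (y : F) (φ : ℕ → ℕ), StrictMono φ ∧
      Filter.Tendsto (fun n => S (u (φ n))) Filter.atTop (nhds y) := by
  have hK := hS.isCompact_closure_image_closedBall (𝕜₁ := ℂ) (f := (S : E →ₗ[ℂ] F)) r
  have hmem : ∀ n, S (u n) ∈ closure ((S : E →ₗ[ℂ] F) '' Metric.closedBall 0 r) := fun n =>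
    subset_closure ⟨u n, by simpa [Metric.mem_closedBall, dist_eq_norm] using hu n, rfl⟩
  obtain ⟨y, _, φ, hφ, hy⟩ := hK.tendsto_subseq hmem
  exact ⟨y, φ, hφ, hy⟩

open ContinuousLinearMap in
lemma norm_attained {E F : Type*} [NormedAddCommGroup E] [InnerProductSpace ℂ E]
    [NormedAddCommGroup F] [InnerProductSpace ℂ F] [CompleteSpace E] [CompleteSpace F]
    (T : E →L[ℂ] F) (h : essNorm T < ‖T‖) :
    ∃ f : E, ‖f‖ = 1 ∧ ‖T f‖ = ‖T‖ := by
  have hT0 : 0 < ‖T‖ := lt_of_le_of_lt (essNorm_nonneg' T) h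
  -- a maximizing sequence of unit vectors
  have hmain : ∀ n : ℕ, ∃ f : E, ‖f‖ = 1 ∧ ‖T‖ - min (1 / (n + 1 : ℝ)) (‖T‖ / 2) < ‖T f‖ := by
    intro n
    set ε := min (1 / (n + 1 : ℝ)) (‖T‖ / 2) with hε
    have hε0 : 0 < ε := lt_min (by positivity) (by positivity)
    have hb : 0 ≤ ‖T‖ - ε := by
      have : ε ≤ ‖T‖ / 2 := min_le_right _ _
      linarith
    by_contra hcon
    push_neg at hcon
    have : ‖T‖ ≤ ‖T‖ - ε := by
      refine T.opNorm_le_bound hb (fun x => ?_)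
      rcases eq_or_ne x 0 with rfl | hx
      · simp
      · have hx0 : 0 < ‖x‖ := norm_pos_iff.2 hx
        have hnorm : ‖((‖x‖⁻¹ : ℝ) : ℂ) • x‖ = 1 := by
          rw [norm_smul]
          simp [hx0.ne']
        have h1 := hcon _ hnorm
        rw [_root_.map_smul, norm_smul] at h1
        have h2 : ‖x‖⁻¹ * ‖T x‖ ≤ ‖T‖ - ε := by simpa using h1
        calc ‖T x‖ = ‖x‖ * (‖x‖⁻¹ * ‖T x‖) := by field_simp
        _ ≤ ‖x‖ * (‖T‖ - ε) := mul_le_mul_of_nonneg_left h2 hx0.le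
        _ = (‖T‖ - ε) * ‖x‖ := by ring
    linarith
  choose u hu1 hu2 using hmain
  have hub : ∀ n, ‖T (u n)‖ ≤ ‖T‖ := fun n => by
    simpa [hu1 n] using T.le_opNorm (u n)
  have hεlim : Filter.Tendsto (fun n : ℕ => min (1 / (n + 1 : ℝ)) (‖T‖ / 2))
      Filter.atTop (nhds 0) := by
    have h1 : Filter.Tendsto (fun n : ℕ => 1 / (n + 1 : ℝ)) Filter.atTop (nhds 0) :=
      tendsto_one_div_add_atTop_nhds_zero_nat
    have := h1.min (tendsto_const_nhds (x := ‖T‖ / 2))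
    simpa [min_eq_left (by positivity : (0:ℝ) ≤ ‖T‖ / 2)] using this
  have hTu : Filter.Tendsto (fun n => ‖T (u n)‖) Filter.atTop (nhds ‖T‖) := by
    have hlo : Filter.Tendsto (fun n : ℕ => ‖T‖ - min (1 / (n + 1 : ℝ)) (‖T‖ / 2))
        Filter.atTop (nhds ‖T‖) := by
      simpa using (tendsto_const_nhds (x := ‖T‖)).sub hεlim
    exact tendsto_of_tendsto_of_tendsto_of_le_of_le hlo tendsto_const_nhds
      (fun n => (hu2 n).le) hub
  -- compact approximation
  obtain ⟨S, hScomp, hTS⟩ := exists_compact_of_essNorm_lt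
    (show essNorm T < (essNorm T + ‖T‖) / 2 by linarith)
  have hcmid : (essNorm T + ‖T‖) / 2 < ‖T‖ := by linarith [essNorm_nonneg' T]
  set a : ℝ := ‖T‖ ^ 2 with ha
  have ha0 : 0 < a := by positivity
  set A : E →L[ℂ] E := (ContinuousLinearMap.adjoint T).comp T with hA
  have hAuu : ∀ x : E, RCLike.re (inner ℂ (A x) x : ℂ) = ‖T x‖ ^ 2 := by
    intro x
    have h1 : (inner ℂ (A x) x : ℂ) = inner ℂ (T x) (T x) :=
      ContinuousLinearMap.adjoint_inner_left T x (T x)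
    rw [h1]
    exact inner_self_eq_norm_sq (T x)
  have hadnorm : ‖ContinuousLinearMap.adjoint T‖ = ‖T‖ :=
    LinearIsometryEquiv.norm_map ContinuousLinearMap.adjoint T
  have hAle : ∀ x : E, ‖x‖ = 1 → ‖A x‖ ≤ a := by
    intro x hx
    calc ‖A x‖ ≤ ‖ContinuousLinearMap.adjoint T‖ * ‖T x‖ :=
          (ContinuousLinearMap.adjoint T).le_opNorm (T x)
    _ ≤ ‖T‖ * (‖T‖ * ‖x‖) := by
        refine mul_le_mul (le_of_eq hadnorm) (T.le_opNorm x) (norm_nonneg _) (norm_nonneg _)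
    _ = a := by rw [hx]; ring
  -- approximate eigenvector estimate
  have hsq : ∀ n, ‖A (u n) - ((a : ℂ)) • u n‖ ^ 2 ≤ 2 * a ^ 2 - 2 * a * ‖T (u n)‖ ^ 2 := by
    intro n
    have hre : RCLike.re (inner ℂ (A (u n)) (((a : ℂ)) • u n) : ℂ) = a * ‖T (u n)‖ ^ 2 := by
      rw [inner_smul_right]
      have h4 : RCLike.re ((a : ℂ) * inner ℂ (A (u n)) (u n)) =
          a * RCLike.re (inner ℂ (A (u n)) (u n) : ℂ) := by
        simp [RCLike.re_to_complex, Complex.re_ofReal_mul]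
      rw [h4, hAuu]
    have hexp := @norm_sub_sq ℂ _ _ _ _ (A (u n)) (((a : ℂ)) • u n)
    have h1 : ‖A (u n)‖ ^ 2 ≤ a ^ 2 := by
      have := hAle (u n) (hu1 n)
      nlinarith [norm_nonneg (A (u n))]
    have h2 : ‖((a : ℂ)) • u n‖ ^ 2 = a ^ 2 := by
      rw [norm_smul, hu1 n]
      simp [Complex.norm_real, abs_of_pos ha0]
    rw [hexp, hre, h2]
    nlinarith [T.le_opNorm (u n), norm_nonneg (T (u n))]
  have hn2 : Filter.Tendsto (fun n => ‖A (u n) - ((a : ℂ)) • u n‖ ^ 2) Filter.atTop (nhds 0) := by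
    have h1 : Filter.Tendsto (fun n => ‖T (u n)‖ ^ 2) Filter.atTop (nhds a) := by
      simpa [ha] using hTu.pow 2
    have h2 : Filter.Tendsto (fun n => 2 * a ^ 2 - 2 * a * ‖T (u n)‖ ^ 2)
        Filter.atTop (nhds (2 * a ^ 2 - 2 * a * a)) :=
      tendsto_const_nhds.sub ((h1.const_mul (2 * a)))
    have h3 : 2 * a ^ 2 - 2 * a * a = 0 := by ring
    rw [h3] at h2
    exact tendsto_of_tendsto_of_tendsto_of_le_of_le tendsto_const_nhds h2
      (fun n => sq_nonneg _) hsq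
  have hres : Filter.Tendsto (fun n => A (u n) - ((a : ℂ)) • u n) Filter.atTop (nhds 0) := by
    rw [tendsto_zero_iff_norm_tendsto_zero]
    have := (Real.continuous_sqrt.tendsto 0).comp hn2
    simpa [Real.sqrt_sq (norm_nonneg _), Function.comp_def] using this
  -- extract convergent subsequence along the compact operator
  obtain ⟨y, φ, hφ, hy⟩ := compact_subseq hScomp (u := u) (r := 1) (fun n => (hu1 n).le)
  set v : ℕ → E := fun n => u (φ n) with hv
  have hy2 : Filter.Tendsto (fun n => ContinuousLinearMap.adjoint T (S (v n)))
      Filter.atTop (nhds (ContinuousLinearMap.adjoint T y)) :=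
    ((ContinuousLinearMap.adjoint T).continuous.tendsto y).comp hy
  set R : E →L[ℂ] E := (ContinuousLinearMap.adjoint T).comp (T - S) with hRdef
  have hR : ‖R‖ < a := by
    calc ‖R‖ ≤ ‖ContinuousLinearMap.adjoint T‖ * ‖T - S‖ := ContinuousLinearMap.opNorm_comp_le _ _
    _ = ‖T‖ * ‖T - S‖ := by rw [hadnorm]
    _ < ‖T‖ * ‖T‖ := by
        apply mul_lt_mul_of_pos_left _ hT0
        exact lt_trans hTS hcmid
    _ = a := by rw [ha]; ring
  have hAR : ∀ x : E, A x - R x = ContinuousLinearMap.adjoint T (S x) := by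
    intro x
    simp only [hA, hRdef, ContinuousLinearMap.comp_apply, ContinuousLinearMap.sub_apply]
    rw [← map_sub]
    congr 1
    abel
  have hW : ‖((a : ℂ))⁻¹ • R‖ < 1 := by
    rw [norm_smul]
    have : ‖((a : ℂ))⁻¹‖ = a⁻¹ := by
      rw [norm_inv, Complex.norm_real, Real.norm_eq_abs, abs_of_pos ha0]
    rw [this, inv_mul_eq_div]
    exact (div_lt_one ha0).2 hR
  set W : (E →L[ℂ] E)ˣ := Units.oneSub (((a : ℂ))⁻¹ • R) hW with hWdef
  have hWval : ∀ x : E, (W : E →L[ℂ] E) x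
      = ((a : ℂ))⁻¹ • (-(A x - ((a : ℂ)) • x) + ContinuousLinearMap.adjoint T (S x)) := by
    intro x
    have hWcoe : (W : E →L[ℂ] E) = 1 - ((a : ℂ))⁻¹ • R := rfl
    have h1 : (W : E →L[ℂ] E) x = x - ((a : ℂ))⁻¹ • R x := by
      rw [hWcoe]
      simp [ContinuousLinearMap.sub_apply]
    rw [h1, ← hAR x]
    have haC : ((a : ℂ)) ≠ 0 := by
      simpa using ha0.ne'
    rw [smul_add, smul_neg, smul_sub, smul_smul, inv_mul_cancel₀ haC, one_smul]
    module
  have hg : Filter.Tendsto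
      (fun n => -(A (v n) - ((a : ℂ)) • v n) + ContinuousLinearMap.adjoint T (S (v n)))
      Filter.atTop (nhds (ContinuousLinearMap.adjoint T y)) := by
    have h0 : Filter.Tendsto (fun n => A (v n) - ((a : ℂ)) • v n) Filter.atTop (nhds 0) :=
      hres.comp hφ.tendsto_atTop
    simpa using h0.neg.add hy2
  have hWv : Filter.Tendsto (fun n => (W : E →L[ℂ] E) (v n)) Filter.atTop
      (nhds (((a : ℂ))⁻¹ • ContinuousLinearMap.adjoint T y)) := by
    have := hg.const_smul (((a : ℂ))⁻¹)
    simpa [hWval] using this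
  have hinv : ∀ x : E, (↑W⁻¹ : E →L[ℂ] E) ((W : E →L[ℂ] E) x) = x := by
    intro x
    have h : (↑W⁻¹ * ↑W : E →L[ℂ] E) = 1 := W.inv_mul
    calc (↑W⁻¹ : E →L[ℂ] E) ((W : E →L[ℂ] E) x) = (↑W⁻¹ * ↑W : E →L[ℂ] E) x := rfl
    _ = (1 : E →L[ℂ] E) x := by rw [h]
    _ = x := rfl
  have hvlim : Filter.Tendsto v Filter.atTop
      (nhds ((↑W⁻¹ : E →L[ℂ] E) (((a : ℂ))⁻¹ • ContinuousLinearMap.adjoint T y))) := by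
    have := ((↑W⁻¹ : E →L[ℂ] E).continuous.tendsto _).comp hWv
    simpa [Function.comp_def, hinv] using this
  set f : E := (↑W⁻¹ : E →L[ℂ] E) (((a : ℂ))⁻¹ • ContinuousLinearMap.adjoint T y) with hf
  refine ⟨f, ?_, ?_⟩
  · have h1 : Filter.Tendsto (fun n => ‖v n‖) Filter.atTop (nhds ‖f‖) :=
      (continuous_norm.tendsto _).comp hvlim
    have h2 : Filter.Tendsto (fun n => ‖v n‖) Filter.atTop (nhds 1) := by
      have : (fun n => ‖v n‖) = fun _ => (1 : ℝ) := funext fun n => hu1 (φ n)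
      rw [this]; exact tendsto_const_nhds
    exact tendsto_nhds_unique h1 h2
  · have h1 : Filter.Tendsto (fun n => ‖T (v n)‖) Filter.atTop (nhds ‖T f‖) :=
      (continuous_norm.tendsto _).comp ((T.continuous.tendsto _).comp hvlim)
    have h2 : Filter.Tendsto (fun n => ‖T (v n)‖) Filter.atTop (nhds ‖T‖) :=
      hTu.comp hφ.tendsto_atTop
    exact tendsto_nhds_unique h1 h2

lemma findim_of_lower_bound {E F : Type*} [NormedAddCommGroup E] [InnerProductSpace ℂ E]
    [NormedAddCommGroup F] [InnerProductSpace ℂ F] [CompleteSpace E]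
    (S : E →L[ℂ] F) (hS : IsCompactOperator S) (V : Submodule ℂ E)
    (hV : IsClosed (V : Set E)) {c : ℝ} (hc : 0 < c)
    (hb : ∀ f ∈ V, c * ‖f‖ ≤ ‖S f‖) : FiniteDimensional ℂ ↥V := by
  haveI : CompleteSpace ↥V := hV.completeSpace_coe
  have hcomp : IsCompact (Metric.closedBall (0 : ↥V) 1) := by
    apply IsSeqCompact.isCompact
    intro u hu
    have hub : ∀ n, ‖(u n : E)‖ ≤ 1 := by
      intro n
      have := hu n
      rw [Metric.mem_closedBall, dist_zero_right] at this
      simpa using this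
    obtain ⟨y, φ, hφ, hy⟩ := compact_subseq hS (u := fun n => (u n : E)) (r := 1) hub
    have hcauchy : CauchySeq (fun n => u (φ n)) := by
      rw [Metric.cauchySeq_iff]
      intro ε hε
      have hSc : CauchySeq (fun n => S (u (φ n) : E)) := hy.cauchySeq
      rw [Metric.cauchySeq_iff] at hSc
      obtain ⟨N, hN⟩ := hSc (c * ε) (by positivity)
      refine ⟨N, fun m hm n hn => ?_⟩
      have h1 := hN m hm n hn
      rw [dist_eq_norm] at h1 ⊢
      have h2 : (u (φ m) : E) - (u (φ n) : E) ∈ V := sub_mem (u (φ m)).2 (u (φ n)).2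
      have h3 := hb _ h2
      rw [map_sub] at h3
      have h4 : ‖u (φ m) - u (φ n)‖ = ‖(u (φ m) : E) - (u (φ n) : E)‖ := rfl
      rw [h4]
      nlinarith [norm_nonneg ((u (φ m) : E) - (u (φ n) : E))]
    obtain ⟨x, hx⟩ := cauchySeq_tendsto_of_complete hcauchy
    have hxmem : x ∈ Metric.closedBall (0 : ↥V) 1 :=
      Metric.isClosed_closedBall.mem_of_tendsto hx (Filter.Eventually.of_forall fun n => hu (φ n))
    exact ⟨x, hxmem, φ, hφ, hx⟩
  exact FiniteDimensional.of_isCompact_closedBall₀ ℂ zero_lt_one hcomp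

/-! ### L² lemmas -/

lemma L2_pythagoras (m : ℕ) (g : L2 m) :
    ‖g‖ ^ 2 = ‖Pplus m g‖ ^ 2 + ‖PminusL m g‖ ^ 2 := by
  have h := Submodule.norm_sq_eq_add_norm_sq_projection g (Hardy m)
  have h2 : PminusL m g = (((Hardy m)ᗮ.orthogonalProjectionOnto g : L2 m)) := by
    rw [Submodule.orthogonalProjectionOnto_orthogonal]
    rfl
  have h3 : ‖PminusL m g‖ = ‖(Hardy m)ᗮ.orthogonalProjectionOnto g‖ := by
    rw [h2, Submodule.coe_norm]
  rw [h, h3]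
  rfl

lemma hankel_apply {m n : ℕ} (M : L2 n →L[ℂ] L2 m) (f : ↥(Hardy n)) :
    Hankel M f = PminusL m (M (f : L2 n)) := rfl

lemma toeplitz_apply {m n : ℕ} (M : L2 n →L[ℂ] L2 m) (f : ↥(Hardy n)) :
    Toeplitz M f = Pplus m (M (f : L2 n)) := rfl

lemma mul_pythagoras {n : ℕ} (M : L2 n →L[ℂ] L2 n) (f : ↥(Hardy n)) :
    ‖M (f : L2 n)‖ ^ 2 = ‖Toeplitz M f‖ ^ 2 + ‖Hankel M f‖ ^ 2 := by
  rw [hankel_apply, toeplitz_apply]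
  exact L2_pythagoras n (M (f : L2 n))

lemma matOpNorm_ae_le {n : ℕ} {Ψ : circ → Matrix (Fin n) (Fin n) ℂ} (hΨ : MemLinf Ψ) :
    ∀ᵐ ζ ∂mu, matOpNorm (Ψ ζ) ≤ linfNorm Ψ := by
  have h1 := ae_le_essSup (μ := mu) (f := fun t => ENNReal.ofReal (matOpNorm (Ψ t)))
  filter_upwards [h1] with ζ hζ
  have h3 := ENNReal.toReal_mono hΨ.2.ne hζ
  rw [ENNReal.toReal_ofReal (show (0:ℝ) ≤ matOpNorm (Ψ ζ) from norm_nonneg _)] at h3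
  exact h3

lemma mulOp_norm_le {n : ℕ} {Ψ : circ → Matrix (Fin n) (Fin n) ℂ} (hΨ : MemLinf Ψ)
    {M : L2 n →L[ℂ] L2 n} (hM : IsMulOp Ψ M) (f : L2 n) :
    ‖M f‖ ≤ linfNorm Ψ * ‖f‖ := by
  have hL : 0 ≤ linfNorm Ψ := ENNReal.toReal_nonneg
  have hae : ∀ᵐ ζ ∂mu, ‖(M f : circ → EuclideanSpace ℂ (Fin n)) ζ‖ ≤
      ‖(((linfNorm Ψ : ℝ) : ℂ) • f : L2 n) ζ‖ := by
    filter_upwards [hM f, matOpNorm_ae_le hΨ, Lp.coeFn_smul ((linfNorm Ψ : ℝ) : ℂ) f]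
      with ζ h1 h2 h3
    rw [h1, h3]
    have h4 : ‖(Matrix.toEuclideanLin (Ψ ζ)) (f ζ)‖ ≤ matOpNorm (Ψ ζ) * ‖f ζ‖ :=
      (matCLM (Ψ ζ)).le_opNorm (f ζ)
    have h5 : ‖(((linfNorm Ψ : ℝ) : ℂ) • (f : circ → EuclideanSpace ℂ (Fin n))) ζ‖
        = linfNorm Ψ * ‖f ζ‖ := by
      simp [norm_smul, Complex.norm_real, abs_of_nonneg hL]
    rw [h5]
    calc ‖(Matrix.toEuclideanLin (Ψ ζ)) (f ζ)‖ ≤ matOpNorm (Ψ ζ) * ‖f ζ‖ := h4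
    _ ≤ linfNorm Ψ * ‖f ζ‖ := mul_le_mul_of_nonneg_right h2 (norm_nonneg _)
  calc ‖M f‖ ≤ ‖(((linfNorm Ψ : ℝ) : ℂ) • f : L2 n)‖ := Lp.norm_le_norm_of_ae_le hae
  _ = linfNorm Ψ * ‖f‖ := by
      rw [norm_smul, Complex.norm_real, Real.norm_eq_abs, abs_of_nonneg hL]

lemma mulOp_norm_ge {n : ℕ} {Ψ : circ → Matrix (Fin n) (Fin n) ℂ}
    {M : L2 n →L[ℂ] L2 n} (hM : IsMulOp Ψ M) {t : ℝ} (ht0 : 0 ≤ t)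
    (hlow : ∀ᵐ ζ ∂mu, ∀ ξ : EuclideanSpace ℂ (Fin n), t * ‖ξ‖ ≤ ‖matCLM (Ψ ζ) ξ‖)
    (f : L2 n) : t * ‖f‖ ≤ ‖M f‖ := by
  have hae : ∀ᵐ ζ ∂mu, ‖(((t : ℝ) : ℂ) • f : L2 n) ζ‖ ≤
      ‖(M f : circ → EuclideanSpace ℂ (Fin n)) ζ‖ := by
    filter_upwards [hM f, hlow, Lp.coeFn_smul ((t : ℝ) : ℂ) f] with ζ h1 h2 h3
    rw [h1, h3]
    have h5 : ‖(((t : ℝ) : ℂ) • (f : circ → EuclideanSpace ℂ (Fin n))) ζ‖ = t * ‖f ζ‖ := by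
      simp [norm_smul, Complex.norm_real, abs_of_nonneg ht0]
    rw [h5]
    exact h2 (f ζ)
  calc t * ‖f‖ = ‖(((t : ℝ) : ℂ) • f : L2 n)‖ := by
        rw [norm_smul, Complex.norm_real, Real.norm_eq_abs, abs_of_nonneg ht0]
  _ ≤ ‖M f‖ := Lp.norm_le_norm_of_ae_le hae

lemma toeplitz_eq_zero_iff {n : ℕ} (M : L2 n →L[ℂ] L2 n) (f : ↥(Hardy n)) :
    Toeplitz M f = 0 ↔ ‖Hankel M f‖ = ‖M (f : L2 n)‖ := by
  constructor
  · intro h0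
    have h := mul_pythagoras M f
    rw [h0] at h
    simp only [norm_zero] at h
    have : ‖M (f : L2 n)‖ ^ 2 = ‖Hankel M f‖ ^ 2 := by linarith
    calc ‖Hankel M f‖ = Real.sqrt (‖Hankel M f‖ ^ 2) := (Real.sqrt_sq (norm_nonneg _)).symm
    _ = Real.sqrt (‖M (f : L2 n)‖ ^ 2) := by rw [this]
    _ = ‖M (f : L2 n)‖ := Real.sqrt_sq (norm_nonneg _)
  · intro h0
    have h := mul_pythagoras M f
    rw [h0] at h
    have h1 : ‖Toeplitz M f‖ ^ 2 = 0 := by linarith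
    have h2 : ‖Toeplitz M f‖ = 0 := by
      have := sq_nonneg ‖Toeplitz M f‖
      nlinarith [norm_nonneg (Toeplitz M f)]
    exact norm_eq_zero.1 h2

set_option maxHeartbeats 1000000 in
/-- If `Ψ` is badly approximable, `‖H_Ψ‖_e < ‖H_Ψ‖`, and the smallest
singular value of `Ψ(ζ)` is at least `t > ‖H_Ψ‖_e` a.e., then
`ker T_Ψ = { f : ‖H_Ψ f‖ = ‖Ψ f‖ }` is a nonzero finite-dimensional subspace. -/
theorem ker_toeplitz_nonzero_finiteDimensional (n : ℕ)
    (Ψ : circ → Matrix (Fin n) (Fin n) ℂ) (hΨ : MemLinf Ψ)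
    (M : L2 n →L[ℂ] L2 n) (hM : IsMulOp Ψ M)
    (h1 : essNorm (Hankel M) < ‖Hankel M‖)
    (h2 : ‖Hankel M‖ = linfNorm Ψ)
    (t : ℝ) (ht : essNorm (Hankel M) < t)
    (hlow : ∀ᵐ ζ ∂mu, ∀ ξ : EuclideanSpace ℂ (Fin n), t * ‖ξ‖ ≤ ‖matCLM (Ψ ζ) ξ‖) :
    (LinearMap.ker (Toeplitz M : ↥(Hardy n) →ₗ[ℂ] ↥(Hardy n)) : Set ↥(Hardy n)) =
        { f : ↥(Hardy n) | ‖Hankel M f‖ = ‖M (↑f : L2 n)‖ } ∧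
      LinearMap.ker (Toeplitz M : ↥(Hardy n) →ₗ[ℂ] ↥(Hardy n)) ≠ ⊥ ∧
      FiniteDimensional ℂ ↥(LinearMap.ker (Toeplitz M : ↥(Hardy n) →ₗ[ℂ] ↥(Hardy n))) := by
  have ht0 : 0 ≤ t := le_trans (essNorm_nonneg' _) ht.le
  have hset : (LinearMap.ker (Toeplitz M : ↥(Hardy n) →ₗ[ℂ] ↥(Hardy n)) : Set ↥(Hardy n)) =
      { f : ↥(Hardy n) | ‖Hankel M f‖ = ‖M (↑f : L2 n)‖ } := by
    ext f
    simp only [SetLike.mem_coe, LinearMap.mem_ker, Set.mem_setOf_eq]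
    exact toeplitz_eq_zero_iff M f
  refine ⟨hset, ?_, ?_⟩
  · -- nonzero
    obtain ⟨f, hf1, hf2⟩ := norm_attained (Hankel M) h1
    have hfH : ‖(f : L2 n)‖ = 1 := by rw [Submodule.norm_coe]; exact hf1
    have hub := mulOp_norm_le hΨ hM (f : L2 n)
    rw [hfH, mul_one] at hub
    have hHle : ‖Hankel M f‖ ≤ ‖M ((f : L2 n))‖ := by
      have h := mul_pythagoras M f
      nlinarith [norm_nonneg (Toeplitz M f), norm_nonneg (Hankel M f),
        norm_nonneg (M ((f : L2 n)))]
    have heq : ‖Hankel M f‖ = ‖M ((f : L2 n))‖ :=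
      le_antisymm hHle (by rw [hf2, h2]; exact hub)
    rw [Submodule.ne_bot_iff]
    refine ⟨f, LinearMap.mem_ker.2 ((toeplitz_eq_zero_iff M f).2 heq), fun h0 => ?_⟩
    rw [h0, norm_zero] at hf1
    norm_num at hf1
  · -- finite dimensional
    obtain ⟨S, hScomp, hHS⟩ := exists_compact_of_essNorm_lt ht
    have hc : 0 < t - ‖Hankel M - S‖ := by linarith
    have hb : ∀ f ∈ LinearMap.ker (Toeplitz M : ↥(Hardy n) →ₗ[ℂ] ↥(Hardy n)), (t - ‖Hankel M - S‖) * ‖f‖ ≤ ‖S f‖ := by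
      intro f hf
      have hT0 : Toeplitz M f = 0 := LinearMap.mem_ker.1 hf
      have heq : ‖Hankel M f‖ = ‖M ((f : L2 n))‖ := (toeplitz_eq_zero_iff M f).1 hT0
      have hge : t * ‖(f : L2 n)‖ ≤ ‖M ((f : L2 n))‖ := mulOp_norm_ge hM ht0 hlow _
      rw [Submodule.norm_coe] at hge
      have h1' : ‖Hankel M f - S f‖ ≤ ‖Hankel M - S‖ * ‖f‖ := by
        have h := (Hankel M - S).le_opNorm f
        rwa [ContinuousLinearMap.sub_apply] at h
      have h2' : ‖Hankel M f‖ - ‖S f‖ ≤ ‖Hankel M f - S f‖ := norm_sub_norm_le _ _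
      nlinarith [norm_nonneg f]
    exact findim_of_lower_bound S hScomp _ (ContinuousLinearMap.isClosed_ker (Toeplitz M)) hc hb

end MeroIdx
end
end

section
/- Let Ψ ∈ L^∞(M_n) and W = Ψ*Ψ the associated matrix weight, assumed to satisfy W(ζ) ≥ a²I a.e. for some a > 0. Suppose τ := sup{ ||H_Ψ f||_2 : f ∈ (ker T_Ψ)^⊥ ∩ H²(ℂ^n), ||f||_W = 1 } < 1, where ||f||²_W = ∫_T (W(ζ)f(ζ), f(ζ)) dm(ζ). Then ||T_Ψ f||²_2 ≥ (1 − τ²) a² ||f||²_2 for all f ∈ (ker T_Ψ)^⊥; in particular T_Ψ has closed range. -/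
open MeasureTheory ComplexConjugate

noncomputable section

namespace MeroIdx

/-! Singular values and essential norm of operators between Hilbert spaces -/

variable {H K : Type*} [NormedAddCommGroup H] [InnerProductSpace ℂ H]
  [NormedAddCommGroup K] [InnerProductSpace ℂ K]

set_option maxHeartbeats 3200000 in
/-- With `W = Ψ*Ψ ≥ a² I` a.e. (so `‖f‖_W = ‖Ψ f‖₂`), if
`τ = sup { ‖H_Ψ f‖ : f ⊥ ker T_Ψ, ‖f‖_W = 1 } < 1`, then
`‖T_Ψ f‖² ≥ (1 − τ²) a² ‖f‖²` on `(ker T_Ψ)ᗮ`; in particular `T_Ψ` has closed range. -/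
theorem toeplitz_bounded_below_closedRange (n : ℕ)
    (Ψ : circ → Matrix (Fin n) (Fin n) ℂ) (hΨ : MemLinf Ψ)
    (M : L2 n →L[ℂ] L2 n) (hM : IsMulOp Ψ M)
    (a : ℝ) (ha : 0 < a)
    (hW : ∀ᵐ ζ ∂mu, ∀ ξ : EuclideanSpace ℂ (Fin n), a * ‖ξ‖ ≤ ‖matCLM (Ψ ζ) ξ‖)
    (τ : ℝ)
    (hτ : τ = sSup { v : ℝ | ∃ f : ↥(Hardy n), f ∈ (LinearMap.ker (Toeplitz M : ↥(Hardy n) →ₗ[ℂ] ↥(Hardy n)))ᗮ ∧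
        ‖M (↑f : L2 n)‖ = 1 ∧ v = ‖Hankel M f‖ })
    (hτ1 : τ < 1) :
    (∀ f : ↥(Hardy n), f ∈ (LinearMap.ker (Toeplitz M : ↥(Hardy n) →ₗ[ℂ] ↥(Hardy n)))ᗮ →
        (1 - τ ^ 2) * a ^ 2 * ‖f‖ ^ 2 ≤ ‖Toeplitz M f‖ ^ 2) ∧
      IsClosed ((LinearMap.range (Toeplitz M : ↥(Hardy n) →ₗ[ℂ] ↥(Hardy n)) : Submodule ℂ ↥(Hardy n)) : Set ↥(Hardy n)) := by
  classical
  set T := Toeplitz M with hT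
  set Hk := Hankel M with hHk
  -- lower bound `a * ‖g‖ ≤ ‖M g‖` for every `g : L2 n`
  have haux : ∀ g : L2 n, a * ‖g‖ ≤ ‖M g‖ := by
    intro g
    have h1 : ∀ᵐ t ∂mu, ‖(((a : ℂ) • g : L2 n) : circ → EuclideanSpace ℂ (Fin n)) t‖
        ≤ ‖(M g : circ → EuclideanSpace ℂ (Fin n)) t‖ := by
      filter_upwards [Lp.coeFn_smul (a : ℂ) g, hM g, hW] with t h2 h3 h4
      rw [h2, h3]
      simp only [Pi.smul_apply, norm_smul, Complex.norm_real, Real.norm_eq_abs,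
        abs_of_pos ha]
      exact h4 (g t)
    have h5 : ‖((a : ℂ) • g : L2 n)‖ ≤ ‖M g‖ := by
      rw [Lp.norm_def, Lp.norm_def]
      exact ENNReal.toReal_mono (Lp.eLpNorm_ne_top _) (eLpNorm_mono_ae h1)
    calc a * ‖g‖ = ‖((a : ℂ) • g : L2 n)‖ := by
          rw [norm_smul]; simp [abs_of_pos ha]
      _ ≤ ‖M g‖ := h5
  -- Pythagoras: `‖M f‖² = ‖T f‖² + ‖Hk f‖²`
  have hpyth : ∀ f : ↥(Hardy n), ‖M (f : L2 n)‖ ^ 2 = ‖T f‖ ^ 2 + ‖Hk f‖ ^ 2 := by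
    intro f
    set x := M (f : L2 n) with hx
    have hTf : T f = Pplus n x := rfl
    have hHf : Hk f = x - ((Pplus n x : ↥(Hardy n)) : L2 n) := by
      simp [hHk, Hankel, PminusL, PplusL, ContinuousLinearMap.sub_apply, hx]
    have horth : (inner ℂ ((Pplus n x : ↥(Hardy n)) : L2 n)
        (x - ((Pplus n x : ↥(Hardy n)) : L2 n)) : ℂ) = 0 :=
      Submodule.inner_right_of_mem_orthogonal (Pplus n x).2
        (Submodule.sub_starProjection_mem_orthogonal (K := Hardy n) x)
    have h6 := norm_add_sq_eq_norm_sq_add_norm_sq_of_inner_eq_zero _ _ horth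
    rw [add_sub_cancel] at h6
    have hTn : ‖T f‖ = ‖((Pplus n x : ↥(Hardy n)) : L2 n)‖ := by
      rw [hTf]; rfl
    rw [hTn, hHf, pow_two, pow_two, pow_two]
    exact h6
  -- τ is nonnegative
  have hbdd : BddAbove { v : ℝ | ∃ f : ↥(Hardy n), f ∈ (LinearMap.ker (T : ↥(Hardy n) →ₗ[ℂ] ↥(Hardy n)))ᗮ ∧
      ‖M (↑f : L2 n)‖ = 1 ∧ v = ‖Hk f‖ } := by
    refine ⟨‖Hk‖ * a⁻¹, ?_⟩
    rintro v ⟨f, -, hf1, rfl⟩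
    have h7 : a * ‖f‖ ≤ 1 := by
      have := haux (f : L2 n)
      rw [hf1] at this
      exact this
    have h8 : ‖f‖ ≤ a⁻¹ := by
      have h7' : a * ‖f‖ ≤ a * a⁻¹ := by rw [mul_inv_cancel₀ ha.ne']; exact h7
      exact le_of_mul_le_mul_left h7' ha
    calc ‖Hk f‖ ≤ ‖Hk‖ * ‖f‖ := Hk.le_opNorm f
      _ ≤ ‖Hk‖ * a⁻¹ := by
          exact mul_le_mul_of_nonneg_left h8 (norm_nonneg Hk)
  have hτ0 : 0 ≤ τ := by
    rw [hτ]
    apply Real.sSup_nonneg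
    rintro v ⟨f, -, -, rfl⟩
    exact norm_nonneg _
  -- key bound: `‖Hk f‖ ≤ τ * ‖M f‖` on `(ker T)ᗮ`
  have hkey : ∀ f : ↥(Hardy n), f ∈ (LinearMap.ker (T : ↥(Hardy n) →ₗ[ℂ] ↥(Hardy n)))ᗮ →
      ‖Hk f‖ ≤ τ * ‖M (f : L2 n)‖ := by
    intro f hf
    rcases eq_or_lt_of_le (norm_nonneg (M (f : L2 n))) with hc | hc
    · have hf0 : f = 0 := by
        have h9 := haux (f : L2 n)
        rw [← hc, ← Submodule.coe_norm f] at h9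
        have h10 : ‖f‖ ≤ 0 := by nlinarith [norm_nonneg f]
        exact norm_le_zero_iff.mp h10
      rw [hf0]
      simp only [map_zero, norm_zero, ZeroMemClass.coe_zero, mul_zero, le_refl]
    · set c := ‖M (f : L2 n)‖ with hcdef
      set g : ↥(Hardy n) := ((c : ℂ))⁻¹ • f with hg
      have hgmem : g ∈ (LinearMap.ker (T : ↥(Hardy n) →ₗ[ℂ] ↥(Hardy n)))ᗮ := Submodule.smul_mem _ _ hf
      have hMg : M (g : L2 n) = ((c : ℂ))⁻¹ • M (f : L2 n) := by
        rw [hg]; push_cast; rw [_root_.map_smul]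
      have hgn : ‖M (g : L2 n)‖ = 1 := by
        rw [hMg, norm_smul]
        simp only [norm_inv, Complex.norm_real, Real.norm_eq_abs, abs_of_pos hc]
        field_simp
        exact hcdef.symm
      have hmem : ‖Hk g‖ ∈ { v : ℝ | ∃ f : ↥(Hardy n), f ∈ (LinearMap.ker (T : ↥(Hardy n) →ₗ[ℂ] ↥(Hardy n)))ᗮ ∧
          ‖M (↑f : L2 n)‖ = 1 ∧ v = ‖Hk f‖ } := ⟨g, hgmem, hgn, rfl⟩
      have hle : ‖Hk g‖ ≤ τ := by
        rw [hτ]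
        exact le_csSup hbdd hmem
      have hHg : ‖Hk g‖ = c⁻¹ * ‖Hk f‖ := by
        rw [hg, _root_.map_smul, norm_smul]
        simp [norm_inv, abs_of_pos hc]
      rw [hHg] at hle
      calc ‖Hk f‖ = c * (c⁻¹ * ‖Hk f‖) := by field_simp
        _ ≤ c * τ := by exact mul_le_mul_of_nonneg_left hle (le_of_lt hc)
        _ = τ * c := mul_comm _ _
  -- the main inequality
  have hmain : ∀ f : ↥(Hardy n), f ∈ (LinearMap.ker (T : ↥(Hardy n) →ₗ[ℂ] ↥(Hardy n)))ᗮ →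
      (1 - τ ^ 2) * a ^ 2 * ‖f‖ ^ 2 ≤ ‖T f‖ ^ 2 := by
    intro f hf
    have h10 := hpyth f
    have h11 := hkey f hf
    have h12 := haux (f : L2 n)
    have h13 : ‖(f : L2 n)‖ = ‖f‖ := rfl
    rw [h13] at h12
    have h14 : 0 ≤ ‖Hk f‖ := norm_nonneg _
    have h15 : 0 ≤ ‖M (f : L2 n)‖ := norm_nonneg _
    have h16 : 0 ≤ ‖f‖ := norm_nonneg _
    have hh2 : ‖Hk f‖ ^ 2 ≤ τ ^ 2 * ‖M (f : L2 n)‖ ^ 2 := by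
      nlinarith [mul_self_le_mul_self h14 h11]
    have hc2 : a ^ 2 * ‖f‖ ^ 2 ≤ ‖M (f : L2 n)‖ ^ 2 := by
      nlinarith [mul_self_le_mul_self (mul_nonneg ha.le h16) h12]
    have hτ2' : (0:ℝ) ≤ 1 - τ ^ 2 := by nlinarith
    nlinarith [mul_le_mul_of_nonneg_left hc2 hτ2', hh2, h10,
      mul_le_mul_of_nonneg_left hc2 (sq_nonneg τ)]
  refine ⟨hmain, ?_⟩
  -- closed range
  have hτ2 : 0 < 1 - τ ^ 2 := by nlinarith [mul_pos (sub_pos.mpr hτ1) (show (0:ℝ) < 1 + τ by linarith)]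
  set c : ℝ := Real.sqrt (1 - τ ^ 2) * a with hcdef
  have hc : 0 < c := mul_pos (Real.sqrt_pos.mpr hτ2) ha
  set K := (LinearMap.ker (T : ↥(Hardy n) →ₗ[ℂ] ↥(Hardy n)))ᗮ with hK
  haveI : CompleteSpace ↥K := (Submodule.isClosed_orthogonal _).completeSpace_coe
  set S : ↥K →L[ℂ] ↥(Hardy n) := T.comp K.subtypeL with hS
  have hSb : ∀ x : ↥K, ‖x‖ ≤ (⟨c⁻¹, (inv_pos.mpr hc).le⟩ : NNReal) * ‖S x‖ := by
    intro x
    have h17 := hmain (x : ↥(Hardy n)) x.2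
    have h18 : c * ‖x‖ ≤ ‖S x‖ := by
      have h19 : (c * ‖x‖) ^ 2 ≤ ‖S x‖ ^ 2 := by
        have hxn : ‖(x : ↥(Hardy n))‖ = ‖x‖ := rfl
        have hSx : S x = T (x : ↥(Hardy n)) := rfl
        have h20 : (c * ‖x‖) ^ 2 = (1 - τ ^ 2) * a ^ 2 * ‖x‖ ^ 2 := by
          rw [hcdef, mul_pow, mul_pow, Real.sq_sqrt hτ2.le]; try ring
        rw [h20]
        exact h17
      nlinarith [norm_nonneg (S x), mul_nonneg hc.le (norm_nonneg x)]
    have : ‖x‖ ≤ c⁻¹ * ‖S x‖ := by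
      rw [le_inv_mul_iff₀ hc]
      exact h18
    simpa using this
  have hanti := S.antilipschitz_of_bound hSb
  have hclosed : IsClosed (Set.range S) := hanti.isClosed_range S.uniformContinuous
  have hker : IsClosed ((LinearMap.ker (T : ↥(Hardy n) →ₗ[ℂ] ↥(Hardy n)) : Submodule ℂ ↥(Hardy n)) : Set ↥(Hardy n)) :=
    ContinuousLinearMap.isClosed_ker T
  haveI : CompleteSpace ↥(LinearMap.ker (T : ↥(Hardy n) →ₗ[ℂ] ↥(Hardy n))) := hker.completeSpace_coe
  have hrange : ((LinearMap.range (T : ↥(Hardy n) →ₗ[ℂ] ↥(Hardy n)) : Submodule ℂ ↥(Hardy n)) : Set ↥(Hardy n))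
      = Set.range S := by
    ext y
    constructor
    · rintro ⟨f, rfl⟩
      refine ⟨⟨f - ((LinearMap.ker (T : ↥(Hardy n) →ₗ[ℂ] ↥(Hardy n))).orthogonalProjectionOnto f : ↥(Hardy n)),
        Submodule.sub_starProjection_mem_orthogonal (K := LinearMap.ker (T : ↥(Hardy n) →ₗ[ℂ] ↥(Hardy n))) f⟩, ?_⟩
      have hz : T (((LinearMap.ker (T : ↥(Hardy n) →ₗ[ℂ] ↥(Hardy n))).orthogonalProjectionOnto f : ↥(Hardy n))) = 0 :=
        ((LinearMap.ker (T : ↥(Hardy n) →ₗ[ℂ] ↥(Hardy n))).orthogonalProjectionOnto f).2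
      show T (f - (((LinearMap.ker (T : ↥(Hardy n) →ₗ[ℂ] ↥(Hardy n))).orthogonalProjectionOnto f : ↥(LinearMap.ker (T : ↥(Hardy n) →ₗ[ℂ] ↥(Hardy n)))) : ↥(Hardy n))) = T f
      rw [map_sub, hz, sub_zero]
    · rintro ⟨x, rfl⟩
      exact ⟨(x : ↥(Hardy n)), rfl⟩
  rw [hrange]
  exact hclosed

end MeroIdx
end
end
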